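/- Let C be a type carrying two category structures 𝒩 and ℛ (categories with the same objects), let G : 𝒩 ⥤ ℛ be a functor that is the identity on objects, let dag be an operation assigning to each ℛ-morphism g : B ⟶ A a morphism dag g : A ⟶ B, and let act be an operation assigning to each ℛ-morphism g : B ⟶ A and each 𝒩-morphism h : A ⟶ A an 𝒩-morphism act g h : B ⟶ B, such that G.map (act g h) = g ≫ G.map h ≫ dag g for all g and h. If moreover act g (𝟙 A) = 𝟙 B for all g : B ⟶ A in ℛ, then every ℛ-morphism g : B ⟶ A satisfies g ≫ dag g = 𝟙 B. (Hence requiring the with-computed operation to satisfy g ⋅ id = id would force g ; g† = id for all reversible morphisms g.) -/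
import Mathlib


universe u v w

/-- Let `𝒩` (`cN`) and `ℛ` (`cR`) be two category structures on the same type of
objects, let `G` be an identity-on-objects functor from `𝒩` to `ℛ` (given by its
action on morphisms, preserving identities and composition), let `dag` be a
dagger operation on `ℛ`, and let `act` be a with-computed operation satisfying
`G (act g h) = g ≫ G h ≫ dag g`. If moreover `act g (𝟙 A) = 𝟙 B` for all
`g : B ⟶ A`, then `g ≫ dag g = 𝟙 B` for every `ℛ`-morphism `g`. -/
theorem act_id_forces_dag_section {C : Type u}
    (cN : CategoryTheory.Category.{v} C) (cR : CategoryTheory.Category.{w} C)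
    (G : ∀ {A B : C}, (cN.toCategoryStruct.Hom A B) → (cR.toCategoryStruct.Hom A B))
    (hG_id : ∀ A : C, G (cN.toCategoryStruct.id A) = cR.toCategoryStruct.id A)
    (hG_comp : ∀ {A B D : C} (f : cN.toCategoryStruct.Hom A B)
      (g : cN.toCategoryStruct.Hom B D),
      G (cN.toCategoryStruct.comp f g) = cR.toCategoryStruct.comp (G f) (G g))
    (dag : ∀ {A B : C}, (cR.toCategoryStruct.Hom B A) → (cR.toCategoryStruct.Hom A B))
    (act : ∀ {A B : C}, (cR.toCategoryStruct.Hom B A) →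
      (cN.toCategoryStruct.Hom A A) → (cN.toCategoryStruct.Hom B B))
    (hlaw : ∀ {A B : C} (g : cR.toCategoryStruct.Hom B A)
      (h : cN.toCategoryStruct.Hom A A),
      G (act g h) = cR.toCategoryStruct.comp g
        (cR.toCategoryStruct.comp (G h) (dag g)))
    (hact_id : ∀ {A B : C} (g : cR.toCategoryStruct.Hom B A),
      act g (cN.toCategoryStruct.id A) = cN.toCategoryStruct.id B) :
    ∀ {A B : C} (g : cR.toCategoryStruct.Hom B A),
      cR.toCategoryStruct.comp g (dag g) = cR.toCategoryStruct.id B := by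
  intro A B g
  have h := hlaw g (cN.toCategoryStruct.id A)
  rw [hact_id, hG_id, hG_id, cR.id_comp] at h
  exact h.symm
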